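/- Fix p : ℤ and assume Δ (p−1) : V (p−1) → V (p−1) is surjective. Then for every α ∈ ker (d (p−1)) (every closed (p−1)-element) there exists φ ∈ range (d (p−1)) ∩ ker (Δ p) (an exact harmonic p-element) such that δ p φ − α ∈ range (d (p−2)) (δ φ and α differ by an exact element). (Surjectivity step in the proof of Lemma 3.) -/
import Mathlib


/-- Transport along an equality of indices, as a linear map (the identity map). -/
def lcast (V : ℤ → Type*) [∀ p, AddCommGroup (V p)] [∀ p, Module ℝ (V p)]
    {p q : ℤ} (h : p = q) : V p →ₗ[ℝ] V q := by
  subst h; exact LinearMap.id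

/-- The differential `d (p-1)`, regarded as a linear map into `V p`. -/
def dTo (V : ℤ → Type*) [∀ p, AddCommGroup (V p)] [∀ p, Module ℝ (V p)]
    (d : ∀ p : ℤ, V p →ₗ[ℝ] V (p + 1)) (p : ℤ) : V (p - 1) →ₗ[ℝ] V p :=
  (lcast V (by omega)).comp (d (p - 1))

/-- The codifferential `δ (p+1)`, regarded as a linear map into `V p`. -/
def deltaTo (V : ℤ → Type*) [∀ p, AddCommGroup (V p)] [∀ p, Module ℝ (V p)]
    (δ : ∀ p : ℤ, V p →ₗ[ℝ] V (p - 1)) (p : ℤ) : V (p + 1) →ₗ[ℝ] V p :=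
  (lcast V (by omega)).comp (δ (p + 1))

/-- The Laplacian `Δ p = d (p-1) ∘ δ p + δ (p+1) ∘ d p : V p →ₗ[ℝ] V p`. -/
def Lap (V : ℤ → Type*) [∀ p, AddCommGroup (V p)] [∀ p, Module ℝ (V p)]
    (d : ∀ p : ℤ, V p →ₗ[ℝ] V (p + 1)) (δ : ∀ p : ℤ, V p →ₗ[ℝ] V (p - 1))
    (p : ℤ) : V p →ₗ[ℝ] V p :=
  ((dTo V d p).comp (δ p)) + ((deltaTo V δ p).comp (d p))

section aux

variable (V : ℤ → Type*) [∀ p, AddCommGroup (V p)] [∀ p, Module ℝ (V p)]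

lemma lcast_rfl_apply {a : ℤ} (x : V a) : lcast V (rfl : a = a) x = x := rfl

lemma d_lcast (d : ∀ p : ℤ, V p →ₗ[ℝ] V (p + 1)) {a b : ℤ} (h : a = b) (x : V a) :
    d b (lcast V h x) = lcast V (by rw [h]) (d a x) := by subst h; rfl

lemma delta_lcast (δ : ∀ p : ℤ, V p →ₗ[ℝ] V (p - 1)) {a b : ℤ} (h : a = b) (x : V a) :
    δ b (lcast V h x) = lcast V (by rw [h]) (δ a x) := by subst h; rfl

end aux

/-- **Surjectivity step in the proof of Lemma 3.**  Suppose `Δ (p-1)` is surjective.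
Then for every closed `(p-1)`-element `α` there is an exact harmonic `p`-element `φ`
with `δ p φ - α` exact. -/
theorem delta_surjectivity_step
    (V : ℤ → Type*) [∀ p, AddCommGroup (V p)] [∀ p, Module ℝ (V p)]
    (d : ∀ p : ℤ, V p →ₗ[ℝ] V (p + 1)) (δ : ∀ p : ℤ, V p →ₗ[ℝ] V (p - 1))
    (hd : ∀ p : ℤ, (d (p + 1)).comp (d p) = 0)
    (hδ : ∀ p : ℤ, (δ (p - 1)).comp (δ p) = 0)
    (p : ℤ)
    (hΔ : Function.Surjective (Lap V d δ (p - 1))) :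
    ∀ α : V (p - 1), α ∈ LinearMap.ker (d (p - 1)) →
      ∃ φ : V p, φ ∈ LinearMap.range (dTo V d p) ⊓ LinearMap.ker (Lap V d δ p) ∧
        δ p φ - α ∈ LinearMap.range (dTo V d (p - 1)) := by
  intro α hα
  obtain ⟨β, hβ⟩ := hΔ α
  refine ⟨dTo V d p β, ⟨⟨β, rfl⟩, ?_⟩, ?_⟩
  · -- harmonic
    have hdd : ∀ x : V (p-1), d p (dTo V d p x) = 0 := by
      intro x
      rw [dTo, LinearMap.comp_apply, d_lcast V d (by omega) (d (p-1) x)]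
      have : d (p - 1 + 1) (d (p-1) x) = 0 := by
        have := congrArg (fun f => f x) (hd (p-1)); simpa using this
      rw [this]; simp
    have hδφ : δ p (dTo V d p β) =
        deltaTo V δ (p-1) (d (p-1) β) := by
      rw [dTo, LinearMap.comp_apply, delta_lcast V δ (by omega) (d (p-1) β)]
      rfl
    simp only [SetLike.mem_coe, LinearMap.mem_ker, Lap, LinearMap.add_apply, LinearMap.comp_apply]
    rw [hδφ, hdd]
    have hα' : deltaTo V δ (p-1) (d (p-1) β) = α - dTo V d (p-1) (δ (p-1) β) := by
      have := hβ
      rw [Lap, LinearMap.add_apply, LinearMap.comp_apply, LinearMap.comp_apply] at this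
      linear_combination (norm := abel) this
    rw [hα']
    have h1 : dTo V d p α = 0 := by
      rw [dTo, LinearMap.comp_apply]
      have : d (p-1) α = 0 := hα
      rw [this]; simp
    have h2 : dTo V d p (dTo V d (p-1) (δ (p-1) β)) = 0 := by
      rw [dTo, dTo, LinearMap.comp_apply, LinearMap.comp_apply,
        d_lcast V d (by omega) (d (p-1-1) (δ (p-1) β))]
      have : d (p - 1 - 1 + 1) (d (p-1-1) (δ (p-1) β)) = 0 := by
        have := congrArg (fun f => f (δ (p-1) β)) (hd (p-1-1)); simpa using this
      rw [this]; simp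
    rw [map_sub, h1, h2]
    simp
  · -- δ φ - α exact
    have hδφ : δ p (dTo V d p β) = deltaTo V δ (p-1) (d (p-1) β) := by
      rw [dTo, LinearMap.comp_apply, delta_lcast V δ (by omega) (d (p-1) β)]
      rfl
    have hα' : deltaTo V δ (p-1) (d (p-1) β) = α - dTo V d (p-1) (δ (p-1) β) := by
      have := hβ
      rw [Lap, LinearMap.add_apply, LinearMap.comp_apply, LinearMap.comp_apply] at this
      linear_combination (norm := abel) this
    refine ⟨-(δ (p-1) β), ?_⟩
    rw [map_neg, hδφ, hα']
    abel
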